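/- Let ψ : ℕ → ℝ be a nonnegative sequence with Σ_{k=1}^∞ k·ψ(k) < ∞, let β ∈ ℝ and n ∈ ℕ (n ≥ 1). Then for every function f in the class C^ψ_β L₁ one has ‖f − S_{n−1}(f;·)‖_C ≤ (1/π)·(Σ_{k=n}^∞ ψ(k))·E_n(f^ψ_β)_{L₁}. -/

import Mathlib

open MeasureTheory Real Filter

noncomputable section

/-- `T` is a real trigonometric polynomial of degree at most `m`. -/
def IsTrigPoly (m : ℕ) (T : ℝ → ℝ) : Prop :=
  ∃ a b : ℕ → ℝ, ∀ t : ℝ,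
    T t = a 0 + ∑ k ∈ Finset.Icc 1 m, (a k * Real.cos (k * t) + b k * Real.sin (k * t))

/-- The best approximation `E_n(g)_{L₁}` of `g` in the `L₁`-metric on `[0, 2π]`
by trigonometric polynomials of degree at most `n - 1`. -/
def bestL1 (n : ℕ) (g : ℝ → ℝ) : ℝ :=
  sInf {I : ℝ | ∃ T : ℝ → ℝ, IsTrigPoly (n - 1) T ∧
    I = ∫ t in (0 : ℝ)..(2 * π), |g t - T t|}

/-- The partial Fourier sum `S_m(f; x)` of order `m` of `f`. -/
def fourierSumR (m : ℕ) (f : ℝ → ℝ) (x : ℝ) : ℝ :=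
  (1 / (2 * π)) * (∫ t in (0 : ℝ)..(2 * π), f t) +
    ∑ k ∈ Finset.Icc 1 m,
      ((1 / π) * (∫ t in (0 : ℝ)..(2 * π), f t * Real.cos (k * t)) * Real.cos (k * x) +
        (1 / π) * (∫ t in (0 : ℝ)..(2 * π), f t * Real.sin (k * t)) * Real.sin (k * x))

/-- The kernel `Ψ_β(t) = Σ_{k=1}^∞ ψ(k) cos(k t - βπ/2)`. -/
def PsiKer (ψ : ℕ → ℝ) (β : ℝ) (t : ℝ) : ℝ :=
  ∑' k : ℕ, ψ (k + 1) * Real.cos (((k : ℝ) + 1) * t - β * π / 2)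

/-- `f` belongs to the class `C^ψ_β L₁`, with `(ψ,β)`-derivative `φ`. -/
def InClassL1 (ψ : ℕ → ℝ) (β : ℝ) (f φ : ℝ → ℝ) : Prop :=
  Continuous f ∧ (∀ x, f (x + 2 * π) = f x) ∧
    (∀ x, φ (x + 2 * π) = φ x) ∧
    IntervalIntegrable φ MeasureTheory.volume (-π) π ∧
    (∫ t in (-π)..π, φ t) = 0 ∧
    ∃ a₀ : ℝ, ∀ x, f x = a₀ / 2 + (1 / π) * ∫ t in (-π)..π, PsiKer ψ β (x - t) * φ t

/-- The uniform deviation `‖f - S_{n-1}(f;·)‖_C`. -/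
def dev (n : ℕ) (f : ℝ → ℝ) : ℝ :=
  ⨆ x : ℝ, |f x - fourierSumR (n - 1) f x|

/-- `𝓔_n(C^ψ_{β,1})_C := sup_{f ∈ C^ψ_{β,1}} ‖f - S_{n-1}(f;·)‖_C`. -/
def EnClass (ψ : ℕ → ℝ) (β : ℝ) (n : ℕ) : ℝ :=
  sSup {v : ℝ | ∃ f φ : ℝ → ℝ, InClassL1 ψ β f φ ∧
    (∫ t in (0 : ℝ)..(2 * π), |φ t|) ≤ 1 ∧ v = dev n f}

/-- The kernel `Ψ_{β,n}(t) = Σ_{k=n}^∞ ψ(k) cos(k t - βπ/2)`. -/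
def PsiKerN (ψ : ℕ → ℝ) (β : ℝ) (n : ℕ) (t : ℝ) : ℝ :=
  ∑' k : ℕ, ψ (k + n) * Real.cos (((k + n : ℕ) : ℝ) * t - β * π / 2)


open intervalIntegral

def Pc (β : ℝ) (φ : ℝ → ℝ) (m : ℕ) : ℝ := ∫ s in (-π)..π, Real.cos ((m:ℝ)*s + β*π/2) * φ s
def Qc (β : ℝ) (φ : ℝ → ℝ) (m : ℕ) : ℝ := ∫ s in (-π)..π, Real.sin ((m:ℝ)*s + β*π/2) * φ s
def vterm (ψ : ℕ → ℝ) (β : ℝ) (φ : ℝ → ℝ) (k : ℕ) (t : ℝ) : ℝ :=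
  ψ (k+1) * (Real.cos (((k:ℝ)+1)*t) * Pc β φ (k+1) + Real.sin (((k:ℝ)+1)*t) * Qc β φ (k+1))

-- from t1.lean

lemma intCos (c : ℤ) (θ : ℝ) :
    ∫ t in (0:ℝ)..(2*π), Real.cos ((c:ℝ)*t + θ) = if c = 0 then 2*π*Real.cos θ else 0 := by
  split_ifs with hc
  · subst hc; simp [mul_comm]
  · have hc' : (c:ℝ) ≠ 0 := Int.cast_ne_zero.mpr hc
    have h : ∀ t : ℝ, HasDerivAt (fun u => Real.sin ((c:ℝ)*u + θ) / c)
        (Real.cos ((c:ℝ)*t + θ)) t := by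
      intro t
      have h1 : HasDerivAt (fun u : ℝ => (c:ℝ)*u + θ) (c:ℝ) t := by
        simpa using ((hasDerivAt_id t).const_mul (c:ℝ)).add_const θ
      have h2 := h1.sin.div_const (c:ℝ)
      simpa [hc'] using h2
    rw [intervalIntegral.integral_eq_sub_of_hasDerivAt (fun t _ => h t)
      ((Continuous.intervalIntegrable (by continuity) _ _))]
    have e1 : (c:ℝ)*(2*π) + θ = θ + c*(2*π) := by ring
    rw [e1, Real.sin_add_int_mul_two_pi]
    simp

lemma intSin (c : ℤ) (θ : ℝ) :
    ∫ t in (0:ℝ)..(2*π), Real.sin ((c:ℝ)*t + θ) = if c = 0 then 2*π*Real.sin θ else 0 := by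
  split_ifs with hc
  · subst hc; simp [mul_comm]
  · have hc' : (c:ℝ) ≠ 0 := Int.cast_ne_zero.mpr hc
    have h : ∀ t : ℝ, HasDerivAt (fun u => -(Real.cos ((c:ℝ)*u + θ) / c))
        (Real.sin ((c:ℝ)*t + θ)) t := by
      intro t
      have h1 : HasDerivAt (fun u : ℝ => (c:ℝ)*u + θ) (c:ℝ) t := by
        simpa using ((hasDerivAt_id t).const_mul (c:ℝ)).add_const θ
      have h2 := (h1.cos.div_const (c:ℝ)).neg
      rw [mul_div_assoc, div_self hc', mul_one, neg_neg] at h2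
      exact h2
    rw [intervalIntegral.integral_eq_sub_of_hasDerivAt (fun t _ => h t)
      ((Continuous.intervalIntegrable (by continuity) _ _))]
    have e1 : (c:ℝ)*(2*π) + θ = θ + c*(2*π) := by ring
    rw [e1, Real.cos_add_int_mul_two_pi]
    simp


-- from t2.lean

lemma ortho_cc (N k : ℕ) (hN : 1 ≤ N) (θ : ℝ) :
    ∫ s in (0:ℝ)..(2*π), Real.cos ((N:ℝ)*s + θ) * Real.cos ((k:ℝ)*s)
      = if N = k then π * Real.cos θ else 0 := by
  have key : ∀ s : ℝ, Real.cos ((N:ℝ)*s + θ) * Real.cos ((k:ℝ)*s)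
      = (Real.cos ((((N:ℤ) - k : ℤ):ℝ)*s + θ) + Real.cos ((((N:ℤ) + k : ℤ):ℝ)*s + θ)) / 2 := by
    intro s
    have e1 : ((((N:ℤ) - k : ℤ)):ℝ)*s + θ = ((N:ℝ)*s + θ) - (k:ℝ)*s := by push_cast; ring
    have e2 : ((((N:ℤ) + k : ℤ)):ℝ)*s + θ = ((N:ℝ)*s + θ) + (k:ℝ)*s := by push_cast; ring
    rw [e1, e2]; simp only [Real.cos_sub, Real.cos_add, Real.sin_add, Real.sin_sub]; ring
  rw [intervalIntegral.integral_congr (fun s _ => key s)]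
  have h1 : IntervalIntegrable (fun s => Real.cos ((((N:ℤ) - k : ℤ):ℝ)*s + θ)) volume 0 (2*π) :=
    Continuous.intervalIntegrable (by continuity) _ _
  have h2 : IntervalIntegrable (fun s => Real.cos ((((N:ℤ) + k : ℤ):ℝ)*s + θ)) volume 0 (2*π) :=
    Continuous.intervalIntegrable (by continuity) _ _
  rw [intervalIntegral.integral_div, intervalIntegral.integral_add h1 h2, intCos, intCos]
  have hNk : ¬((N:ℤ) + k = 0) := by omega
  by_cases h : N = k
  · subst h; rw [if_pos (by omega), if_neg hNk, if_pos rfl]; ring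
  · rw [if_neg (by omega), if_neg hNk, if_neg h]; norm_num

lemma ortho_cs (N k : ℕ) (hN : 1 ≤ N) (hNk : N ≠ k) (θ : ℝ) :
    ∫ s in (0:ℝ)..(2*π), Real.cos ((N:ℝ)*s + θ) * Real.sin ((k:ℝ)*s) = 0 := by
  have key : ∀ s : ℝ, Real.cos ((N:ℝ)*s + θ) * Real.sin ((k:ℝ)*s)
      = (Real.sin ((((N:ℤ) + k : ℤ):ℝ)*s + θ) - Real.sin ((((N:ℤ) - k : ℤ):ℝ)*s + θ)) / 2 := by
    intro s
    have e1 : ((((N:ℤ) + k : ℤ)):ℝ)*s + θ = ((N:ℝ)*s + θ) + (k:ℝ)*s := by push_cast; ring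
    have e2 : ((((N:ℤ) - k : ℤ)):ℝ)*s + θ = ((N:ℝ)*s + θ) - (k:ℝ)*s := by push_cast; ring
    rw [e1, e2]; simp only [Real.cos_sub, Real.cos_add, Real.sin_add, Real.sin_sub]; ring
  rw [intervalIntegral.integral_congr (fun s _ => key s)]
  have h1 : IntervalIntegrable (fun s => Real.sin ((((N:ℤ) + k : ℤ):ℝ)*s + θ)) volume 0 (2*π) :=
    Continuous.intervalIntegrable (by continuity) _ _
  have h2 : IntervalIntegrable (fun s => Real.sin ((((N:ℤ) - k : ℤ):ℝ)*s + θ)) volume 0 (2*π) :=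
    Continuous.intervalIntegrable (by continuity) _ _
  rw [intervalIntegral.integral_div, intervalIntegral.integral_sub h1 h2, intSin, intSin]
  rw [if_neg (by omega : ¬((N:ℤ) + k = 0)), if_neg (by omega : ¬((N:ℤ) - k = 0))]
  norm_num

lemma ortho_ss (N k : ℕ) (hN : 1 ≤ N) (θ : ℝ) :
    ∫ s in (0:ℝ)..(2*π), Real.sin ((N:ℝ)*s + θ) * Real.sin ((k:ℝ)*s)
      = if N = k then π * Real.cos θ else 0 := by
  have key : ∀ s : ℝ, Real.sin ((N:ℝ)*s + θ) * Real.sin ((k:ℝ)*s)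
      = (Real.cos ((((N:ℤ) - k : ℤ):ℝ)*s + θ) - Real.cos ((((N:ℤ) + k : ℤ):ℝ)*s + θ)) / 2 := by
    intro s
    have e1 : ((((N:ℤ) - k : ℤ)):ℝ)*s + θ = ((N:ℝ)*s + θ) - (k:ℝ)*s := by push_cast; ring
    have e2 : ((((N:ℤ) + k : ℤ)):ℝ)*s + θ = ((N:ℝ)*s + θ) + (k:ℝ)*s := by push_cast; ring
    rw [e1, e2]; simp only [Real.cos_sub, Real.cos_add, Real.sin_add, Real.sin_sub]; ring
  rw [intervalIntegral.integral_congr (fun s _ => key s)]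
  have h1 : IntervalIntegrable (fun s => Real.cos ((((N:ℤ) - k : ℤ):ℝ)*s + θ)) volume 0 (2*π) :=
    Continuous.intervalIntegrable (by continuity) _ _
  have h2 : IntervalIntegrable (fun s => Real.cos ((((N:ℤ) + k : ℤ):ℝ)*s + θ)) volume 0 (2*π) :=
    Continuous.intervalIntegrable (by continuity) _ _
  rw [intervalIntegral.integral_div, intervalIntegral.integral_sub h1 h2, intCos, intCos]
  have hNk : ¬((N:ℤ) + k = 0) := by omega
  by_cases h : N = k
  · subst h; rw [if_pos (by omega), if_neg hNk, if_pos rfl]; ring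
  · rw [if_neg (by omega), if_neg hNk, if_neg h]; norm_num

lemma ortho_c1 (N : ℕ) (hN : 1 ≤ N) (θ : ℝ) :
    ∫ s in (0:ℝ)..(2*π), Real.cos ((N:ℝ)*s + θ) = 0 := by
  have := intCos (N:ℤ) θ
  rw [if_neg (by omega : ¬((N:ℤ) = 0))] at this
  simpa using this


-- from t3.lean

lemma periodic_shift {g : ℝ → ℝ} (hg : Function.Periodic g (2*π)) :
    ∫ t in (-π)..π, g t = ∫ t in (0:ℝ)..(2*π), g t := by
  have := hg.intervalIntegral_add_eq (-π) 0
  rw [show -π + 2*π = π by ring, zero_add] at this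
  exact this

lemma periodic_integrable {φ : ℝ → ℝ} (hper : ∀ x, φ (x + 2*π) = φ x)
    (hint : IntervalIntegrable φ volume (-π) π) :
    IntervalIntegrable φ volume 0 (2*π) := by
  have hpi := pi_pos
  have h1 : IntervalIntegrable φ volume 0 π :=
    hint.mono_set (by
      rw [Set.uIcc_of_le (le_of_lt hpi), Set.uIcc_of_le (by linarith : -π ≤ π)]
      exact Set.Icc_subset_Icc (by linarith) le_rfl)
  have h2' : IntervalIntegrable (fun x => φ (x - 2*π)) volume (-π + 2*π) (π + 2*π) :=
    hint.comp_sub_right (2*π)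
  have heq : (fun x : ℝ => φ (x - 2*π)) = φ := by
    funext x
    have := hper (x - 2*π)
    rw [sub_add_cancel] at this; exact this.symm
  rw [heq, show -π + 2*π = π by ring, show π + 2*π = 3*π by ring] at h2'
  have h2 : IntervalIntegrable φ volume π (2*π) :=
    h2'.mono_set (by
      rw [Set.uIcc_of_le (by linarith : π ≤ 2*π), Set.uIcc_of_le (by linarith : π ≤ 3*π)]
      exact Set.Icc_subset_Icc le_rfl (by linarith))
  exact h1.trans h2


-- from t4.lean

lemma rep_lemma (ψ : ℕ → ℝ) (hψ : ∀ k, 0 ≤ ψ k) (β : ℝ) (φ : ℝ → ℝ)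
    (hφint : IntervalIntegrable φ volume (-π) π)
    (S1 : Summable fun k => ψ (k+1)) (t : ℝ) :
    ∫ s in (-π)..π, PsiKer ψ β (t - s) * φ s = ∑' k, vterm ψ β φ k t := by
  have hpi := pi_pos
  have hab : (-π:ℝ) ≤ π := by linarith
  have hφIoc : IntegrableOn φ (Set.Ioc (-π) π) volume :=
    (intervalIntegrable_iff_integrableOn_Ioc_of_le hab).1 hφint
  set F : ℕ → ℝ → ℝ := fun k s => (ψ (k+1) * Real.cos (((k:ℝ)+1)*(t - s) - β*π/2)) * φ s with hF
  have hFint : ∀ k, Integrable (F k) (volume.restrict (Set.Ioc (-π) π)) := by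
    intro k
    apply Integrable.bdd_mul (c := ψ (k+1)) hφIoc
    · exact (Continuous.aestronglyMeasurable (by fun_prop))
    · refine Filter.Eventually.of_forall (fun s => ?_)
      rw [Real.norm_eq_abs, abs_mul, abs_of_nonneg (hψ _)]
      exact mul_le_of_le_one_right (hψ _) (abs_cos_le_one _)
  set M : ℝ := ∫ s in Set.Ioc (-π) π, |φ s| with hM
  have hnorm : ∀ k, (∫ s in Set.Ioc (-π) π, ‖F k s‖) ≤ ψ (k+1) * M := by
    intro k
    rw [hM, ← MeasureTheory.integral_const_mul]
    apply integral_mono (hFint k).norm (hφIoc.norm.const_mul _)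
    intro s
    simp only [hF, Real.norm_eq_abs, abs_mul, abs_of_nonneg (hψ _)]
    exact mul_le_mul_of_nonneg_right
      (mul_le_of_le_one_right (hψ _) (abs_cos_le_one _)) (abs_nonneg _)
  have hsumnorm : Summable fun k => ∫ s in Set.Ioc (-π) π, ‖F k s‖ :=
    Summable.of_nonneg_of_le (fun k => integral_nonneg (fun s => norm_nonneg _)) hnorm
      (S1.mul_right M)
  have key := MeasureTheory.integral_tsum_of_summable_integral_norm hFint hsumnorm
  have hptw : ∀ s : ℝ, (∑' k, F k s) = PsiKer ψ β (t - s) * φ s := by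
    intro s
    rw [PsiKer, ← tsum_mul_right]
  have step1 : ∫ s in (-π)..π, PsiKer ψ β (t - s) * φ s = ∑' k, ∫ s in Set.Ioc (-π) π, F k s := by
    rw [intervalIntegral.integral_of_le hab, key]
    exact integral_congr_ae (Filter.Eventually.of_forall (fun s => (hptw s).symm))
  rw [step1]
  congr 1
  funext k
  rw [← intervalIntegral.integral_of_le hab]
  have hcont : ∀ (c : ℝ → ℝ), Continuous c → IntervalIntegrable (fun s => c s * φ s) volume (-π) π :=
    fun c hc => hφint.continuousOn_mul hc.continuousOn
  have e1 : ∀ s : ℝ, F k s =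
      (ψ (k+1) * Real.cos (((k:ℝ)+1)*t)) * (Real.cos ((((k+1):ℕ):ℝ)*s + β*π/2) * φ s)
      + (ψ (k+1) * Real.sin (((k:ℝ)+1)*t)) * (Real.sin ((((k+1):ℕ):ℝ)*s + β*π/2) * φ s) := by
    intro s
    have : ((k:ℝ)+1)*(t - s) - β*π/2 = (((k:ℝ)+1)*t) - ((((k+1):ℕ):ℝ)*s + β*π/2) := by
      push_cast; ring
    rw [hF]; simp only []
    rw [this, Real.cos_sub]
    push_cast
    ring
  rw [intervalIntegral.integral_congr (fun s _ => e1 s),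
    intervalIntegral.integral_add
      ((hcont _ (by fun_prop)).const_mul _)
      ((hcont _ (by fun_prop)).const_mul _),
    intervalIntegral.integral_const_mul, intervalIntegral.integral_const_mul]
  rw [vterm, Pc, Qc]
  push_cast
  ring


-- from t5.lean

lemma abs_intervalIntegral_mul_le {c φ : ℝ → ℝ} (hc : Continuous c) (hbd : ∀ s, |c s| ≤ 1)
    {a b : ℝ} (hab : a ≤ b) (hφ : IntervalIntegrable φ volume a b) :
    |∫ s in a..b, c s * φ s| ≤ ∫ s in a..b, |φ s| := by
  refine le_trans (intervalIntegral.abs_integral_le_integral_abs hab) ?_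
  apply intervalIntegral.integral_mono_on hab
    ((hφ.continuousOn_mul hc.continuousOn).abs) hφ.abs
  intro s _
  rw [abs_mul]
  exact mul_le_of_le_one_left (abs_nonneg _) (hbd s)

lemma Pc_bound (β : ℝ) (φ : ℝ → ℝ) (hφ : IntervalIntegrable φ volume (-π) π) (m : ℕ) :
    |Pc β φ m| ≤ ∫ s in (-π)..π, |φ s| :=
  abs_intervalIntegral_mul_le (by fun_prop) (fun s => abs_cos_le_one _)
    (by linarith [pi_pos]) hφ

lemma Qc_bound (β : ℝ) (φ : ℝ → ℝ) (hφ : IntervalIntegrable φ volume (-π) π) (m : ℕ) :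
    |Qc β φ m| ≤ ∫ s in (-π)..π, |φ s| :=
  abs_intervalIntegral_mul_le (by fun_prop) (fun s => abs_sin_le_one _)
    (by linarith [pi_pos]) hφ

lemma vterm_bound (ψ : ℕ → ℝ) (hψ : ∀ k, 0 ≤ ψ k) (β : ℝ) (φ : ℝ → ℝ)
    (hφ : IntervalIntegrable φ volume (-π) π) (k : ℕ) (t : ℝ) :
    |vterm ψ β φ k t| ≤ ψ (k+1) * (2 * ∫ s in (-π)..π, |φ s|) := by
  set M := ∫ s in (-π)..π, |φ s|
  have hM : 0 ≤ M := intervalIntegral.integral_nonneg (by linarith [pi_pos]) (fun s _ => abs_nonneg _)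
  rw [vterm, abs_mul, abs_of_nonneg (hψ _)]
  have h1 : |Real.cos (((k:ℝ)+1)*t) * Pc β φ (k+1)| ≤ M := by
    rw [abs_mul]
    exact le_trans (mul_le_of_le_one_left (abs_nonneg _) (abs_cos_le_one _)) (Pc_bound β φ hφ _)
  have h2 : |Real.sin (((k:ℝ)+1)*t) * Qc β φ (k+1)| ≤ M := by
    rw [abs_mul]
    exact le_trans (mul_le_of_le_one_left (abs_nonneg _) (abs_sin_le_one _)) (Qc_bound β φ hφ _)
  have := abs_add_le (Real.cos (((k:ℝ)+1)*t) * Pc β φ (k+1)) (Real.sin (((k:ℝ)+1)*t) * Qc β φ (k+1))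
  have : |Real.cos (((k:ℝ)+1)*t) * Pc β φ (k+1) + Real.sin (((k:ℝ)+1)*t) * Qc β φ (k+1)| ≤ 2*M := by
    calc _ ≤ _ := abs_add_le _ _
    _ ≤ 2*M := by linarith
  exact mul_le_mul_of_nonneg_left this (hψ _)

lemma setInt_norm_le {u : ℝ → ℝ} {C : ℝ} {a b : ℝ} (hab : a ≤ b) (hu : Continuous u)
    (hC : ∀ t, |u t| ≤ C) : (∫ t in Set.Ioc a b, ‖u t‖) ≤ C * (b - a) := by
  have h1 : (∫ t in Set.Ioc a b, ‖u t‖) ≤ ∫ _t in Set.Ioc a b, C := by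
    apply setIntegral_mono_on (hu.norm.integrableOn_Ioc)
      (integrableOn_const (by rw [Real.volume_Ioc]; exact ENNReal.ofReal_ne_top))
      measurableSet_Ioc
    exact fun t _ => hC t
  rw [setIntegral_const, measureReal_def, Real.volume_Ioc, ENNReal.toReal_ofReal (by linarith), smul_eq_mul,
    mul_comm] at h1
  exact h1

lemma swap_int (ψ : ℕ → ℝ) (hψ : ∀ k, 0 ≤ ψ k) (β : ℝ) (φ : ℝ → ℝ)
    (hφ : IntervalIntegrable φ volume (-π) π) (S1 : Summable fun k => ψ (k+1))
    (w : ℝ → ℝ) (hw : Continuous w) (hwbd : ∀ t, |w t| ≤ 1) :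
    ∫ t in (0:ℝ)..(2*π), (∑' k, vterm ψ β φ k t) * w t
      = ∑' k, ∫ t in (0:ℝ)..(2*π), vterm ψ β φ k t * w t := by
  have hpi := pi_pos
  set M := ∫ s in (-π)..π, |φ s| with hMdef
  have hM : 0 ≤ M := intervalIntegral.integral_nonneg (by linarith) (fun s _ => abs_nonneg _)
  set F : ℕ → ℝ → ℝ := fun k t => vterm ψ β φ k t * w t with hF
  have hFc : ∀ k, Continuous (F k) := by
    intro k
    have : Continuous (vterm ψ β φ k) := by unfold vterm; fun_prop
    exact this.mul hw
  have hFbd : ∀ k t, |F k t| ≤ ψ (k+1) * (2*M) := by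
    intro k t
    rw [hF]; simp only [abs_mul]
    exact le_trans (mul_le_of_le_one_right (abs_nonneg _) (hwbd t))
      (vterm_bound ψ hψ β φ hφ k t)
  have hFint : ∀ k, Integrable (F k) (volume.restrict (Set.Ioc 0 (2*π))) :=
    fun k => (hFc k).integrableOn_Ioc
  have hnorm : ∀ k, (∫ t in Set.Ioc 0 (2*π), ‖F k t‖) ≤ (ψ (k+1) * (2*M)) * (2*π - 0) :=
    fun k => setInt_norm_le (by linarith) (hFc k) (hFbd k)
  have hsumnorm : Summable fun k => ∫ t in Set.Ioc 0 (2*π), ‖F k t‖ :=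
    Summable.of_nonneg_of_le (fun k => integral_nonneg (fun s => norm_nonneg _)) hnorm
      (by simpa using (S1.mul_right ((2*M) * (2*π - 0))).congr (fun k => by ring)
        : Summable fun k => (ψ (k+1) * (2*M)) * (2*π - 0))
  have key := MeasureTheory.integral_tsum_of_summable_integral_norm hFint hsumnorm
  rw [intervalIntegral.integral_of_le (by linarith : (0:ℝ) ≤ 2*π)]
  have hptw : ∀ t : ℝ, (∑' k, vterm ψ β φ k t) * w t = ∑' k, F k t := by
    intro t
    rw [hF, tsum_mul_right]
  rw [MeasureTheory.integral_congr_ae (Filter.Eventually.of_forall hptw), ← key]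
  apply tsum_congr
  intro k
  rw [intervalIntegral.integral_of_le (by linarith : (0:ℝ) ≤ 2*π)]


-- from t6.lean

lemma intCosN (N : ℕ) (hN : 1 ≤ N) : ∫ t in (0:ℝ)..(2*π), Real.cos ((N:ℝ)*t) = 0 := by
  have := intCos (N:ℤ) 0
  rw [if_neg (by omega : ¬((N:ℤ) = 0))] at this
  simpa using this

lemma intSinN (N : ℕ) (hN : 1 ≤ N) : ∫ t in (0:ℝ)..(2*π), Real.sin ((N:ℝ)*t) = 0 := by
  have := intSin (N:ℤ) 0
  rw [if_neg (by omega : ¬((N:ℤ) = 0))] at this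
  simpa using this

lemma ortho_sc_all (N m : ℕ) :
    ∫ s in (0:ℝ)..(2*π), Real.sin ((N:ℝ)*s) * Real.cos ((m:ℝ)*s) = 0 := by
  have key : ∀ s : ℝ, Real.sin ((N:ℝ)*s) * Real.cos ((m:ℝ)*s)
      = (Real.sin ((((N:ℤ) + m : ℤ):ℝ)*s + 0) + Real.sin ((((N:ℤ) - m : ℤ):ℝ)*s + 0)) / 2 := by
    intro s
    have e1 : ((((N:ℤ) + m : ℤ)):ℝ)*s + 0 = ((N:ℝ)*s) + (m:ℝ)*s := by push_cast; ring
    have e2 : ((((N:ℤ) - m : ℤ)):ℝ)*s + 0 = ((N:ℝ)*s) - (m:ℝ)*s := by push_cast; ring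
    rw [e1, e2]
    simp only [Real.sin_add, Real.sin_sub]
    ring
  rw [intervalIntegral.integral_congr (fun s _ => key s)]
  have h1 : IntervalIntegrable (fun s => Real.sin ((((N:ℤ) + m : ℤ):ℝ)*s + 0)) volume 0 (2*π) :=
    Continuous.intervalIntegrable (by fun_prop) _ _
  have h2 : IntervalIntegrable (fun s => Real.sin ((((N:ℤ) - m : ℤ):ℝ)*s + 0)) volume 0 (2*π) :=
    Continuous.intervalIntegrable (by fun_prop) _ _
  rw [intervalIntegral.integral_div, intervalIntegral.integral_add h1 h2, intSin, intSin]
  split_ifs <;> simp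

lemma ortho_ccN (k m : ℕ) (hm : 1 ≤ m) :
    ∫ t in (0:ℝ)..(2*π), Real.cos (((k:ℝ)+1)*t) * Real.cos ((m:ℝ)*t)
      = if k+1 = m then π else 0 := by
  have := ortho_cc (k+1) m (by omega) 0
  simp only [add_zero, Real.cos_zero, mul_one] at this
  push_cast at this
  exact this

lemma ortho_ssN (k m : ℕ) (hm : 1 ≤ m) :
    ∫ t in (0:ℝ)..(2*π), Real.sin (((k:ℝ)+1)*t) * Real.sin ((m:ℝ)*t)
      = if k+1 = m then π else 0 := by
  have := ortho_ss (k+1) m (by omega) 0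
  simp only [add_zero, Real.cos_zero, mul_one] at this
  push_cast at this
  exact this

lemma ortho_scN (k m : ℕ) :
    ∫ t in (0:ℝ)..(2*π), Real.sin (((k:ℝ)+1)*t) * Real.cos ((m:ℝ)*t) = 0 := by
  have := ortho_sc_all (k+1) m
  push_cast at this
  exact this

lemma ortho_csN (k m : ℕ) :
    ∫ t in (0:ℝ)..(2*π), Real.cos (((k:ℝ)+1)*t) * Real.sin ((m:ℝ)*t) = 0 := by
  by_cases hm : 1 ≤ m
  · have := ortho_sc_all m (k+1)
    push_cast at this
    rw [intervalIntegral.integral_congr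
      (g := fun s => Real.sin ((m:ℝ)*s) * Real.cos (((k:ℝ)+1)*s)) (fun s _ => by ring)]
    exact this
  · have : m = 0 := by omega
    subst this
    simp


-- from t7.lean

lemma vterm_int_cos (ψ : ℕ → ℝ) (β : ℝ) (φ : ℝ → ℝ) (k m : ℕ) (hm : 1 ≤ m) :
    ∫ t in (0:ℝ)..(2*π), vterm ψ β φ k t * Real.cos ((m:ℝ)*t)
      = if k+1 = m then π * (ψ m * Pc β φ m) else 0 := by
  have key : ∀ t : ℝ, vterm ψ β φ k t * Real.cos ((m:ℝ)*t)
      = (ψ (k+1) * Pc β φ (k+1)) * (Real.cos (((k:ℝ)+1)*t) * Real.cos ((m:ℝ)*t))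
        + (ψ (k+1) * Qc β φ (k+1)) * (Real.sin (((k:ℝ)+1)*t) * Real.cos ((m:ℝ)*t)) := by
    intro t; rw [vterm]; ring
  rw [intervalIntegral.integral_congr (fun t _ => key t),
    intervalIntegral.integral_add
      ((Continuous.intervalIntegrable (by fun_prop) _ _).const_mul _)
      ((Continuous.intervalIntegrable (by fun_prop) _ _).const_mul _),
    intervalIntegral.integral_const_mul, intervalIntegral.integral_const_mul,
    ortho_ccN k m hm, ortho_scN k m]
  by_cases h : k+1 = m
  · subst h; rw [if_pos rfl, if_pos rfl]; ring
  · rw [if_neg h, if_neg h]; ring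

lemma vterm_int_sin (ψ : ℕ → ℝ) (β : ℝ) (φ : ℝ → ℝ) (k m : ℕ) (hm : 1 ≤ m) :
    ∫ t in (0:ℝ)..(2*π), vterm ψ β φ k t * Real.sin ((m:ℝ)*t)
      = if k+1 = m then π * (ψ m * Qc β φ m) else 0 := by
  have key : ∀ t : ℝ, vterm ψ β φ k t * Real.sin ((m:ℝ)*t)
      = (ψ (k+1) * Pc β φ (k+1)) * (Real.cos (((k:ℝ)+1)*t) * Real.sin ((m:ℝ)*t))
        + (ψ (k+1) * Qc β φ (k+1)) * (Real.sin (((k:ℝ)+1)*t) * Real.sin ((m:ℝ)*t)) := by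
    intro t; rw [vterm]; ring
  rw [intervalIntegral.integral_congr (fun t _ => key t),
    intervalIntegral.integral_add
      ((Continuous.intervalIntegrable (by fun_prop) _ _).const_mul _)
      ((Continuous.intervalIntegrable (by fun_prop) _ _).const_mul _),
    intervalIntegral.integral_const_mul, intervalIntegral.integral_const_mul,
    ortho_ssN k m hm, ortho_csN k m]
  by_cases h : k+1 = m
  · subst h; rw [if_pos rfl, if_pos rfl]; ring
  · rw [if_neg h, if_neg h]; ring

lemma vterm_int_one (ψ : ℕ → ℝ) (β : ℝ) (φ : ℝ → ℝ) (k : ℕ) :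
    ∫ t in (0:ℝ)..(2*π), vterm ψ β φ k t * 1 = 0 := by
  have key : ∀ t : ℝ, vterm ψ β φ k t * 1
      = (ψ (k+1) * Pc β φ (k+1)) * Real.cos ((((k+1):ℕ):ℝ)*t)
        + (ψ (k+1) * Qc β φ (k+1)) * Real.sin ((((k+1):ℕ):ℝ)*t) := by
    intro t; rw [vterm]; push_cast; ring
  rw [intervalIntegral.integral_congr (fun t _ => key t),
    intervalIntegral.integral_add
      ((Continuous.intervalIntegrable (by fun_prop) _ _).const_mul _)
      ((Continuous.intervalIntegrable (by fun_prop) _ _).const_mul _),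
    intervalIntegral.integral_const_mul, intervalIntegral.integral_const_mul,
    intCosN (k+1) (by omega), intSinN (k+1) (by omega)]
  ring


-- from t8.lean

variable (ψ : ℕ → ℝ) (β : ℝ) (φ : ℝ → ℝ) (f : ℝ → ℝ) (a₀ : ℝ)

lemma vsum_cont (hψ : ∀ k, 0 ≤ ψ k) (hφ : IntervalIntegrable φ volume (-π) π)
    (S1 : Summable fun k => ψ (k+1)) :
    Continuous (fun t => ∑' k, vterm ψ β φ k t) := by
  apply continuous_tsum (fun k => by unfold vterm; fun_prop)
    (S1.mul_right (2 * ∫ s in (-π)..π, |φ s|))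
  intro k t
  exact vterm_bound ψ hψ β φ hφ k t

section coeffs
variable (hψ : ∀ k, 0 ≤ ψ k) (hφ : IntervalIntegrable φ volume (-π) π)
  (S1 : Summable fun k => ψ (k+1))
  (hrep2 : ∀ t, f t = a₀/2 + (1/π) * ∑' k, vterm ψ β φ k t)
include hψ hφ S1 hrep2

lemma coeff_cos (m : ℕ) (hm : 1 ≤ m) :
    ∫ t in (0:ℝ)..(2*π), f t * Real.cos ((m:ℝ)*t) = ψ m * Pc β φ m := by
  have hgc := vsum_cont ψ β φ hψ hφ S1
  have key : ∀ t : ℝ, f t * Real.cos ((m:ℝ)*t)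
      = (a₀/2) * Real.cos ((m:ℝ)*t)
        + (1/π) * ((∑' k, vterm ψ β φ k t) * Real.cos ((m:ℝ)*t)) := by
    intro t; rw [hrep2 t]; ring
  rw [intervalIntegral.integral_congr (fun t _ => key t),
    intervalIntegral.integral_add
      ((Continuous.intervalIntegrable (by fun_prop) _ _).const_mul _)
      ((Continuous.intervalIntegrable (by exact (hgc.mul (by fun_prop))) _ _).const_mul _),
    intervalIntegral.integral_const_mul, intervalIntegral.integral_const_mul,
    intCosN m hm, swap_int ψ hψ β φ hφ S1 _ (by fun_prop) (fun t => abs_cos_le_one _)]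
  have hts : (∑' k, ∫ t in (0:ℝ)..(2*π), vterm ψ β φ k t * Real.cos ((m:ℝ)*t))
      = π * (ψ m * Pc β φ m) := by
    rw [tsum_congr (fun k => vterm_int_cos ψ β φ k m hm), tsum_eq_single (m-1)]
    · rw [if_pos (by omega)]
    · intro k hk; rw [if_neg (by omega)]
  rw [hts]
  have : π ≠ 0 := pi_ne_zero
  field_simp
  ring
lemma coeff_sin (m : ℕ) (hm : 1 ≤ m) :
    ∫ t in (0:ℝ)..(2*π), f t * Real.sin ((m:ℝ)*t) = ψ m * Qc β φ m := by
  have hgc := vsum_cont ψ β φ hψ hφ S1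
  have key : ∀ t : ℝ, f t * Real.sin ((m:ℝ)*t)
      = (a₀/2) * Real.sin ((m:ℝ)*t)
        + (1/π) * ((∑' k, vterm ψ β φ k t) * Real.sin ((m:ℝ)*t)) := by
    intro t; rw [hrep2 t]; ring
  rw [intervalIntegral.integral_congr (fun t _ => key t),
    intervalIntegral.integral_add
      ((Continuous.intervalIntegrable (by fun_prop) _ _).const_mul _)
      ((Continuous.intervalIntegrable (by exact (hgc.mul (by fun_prop))) _ _).const_mul _),
    intervalIntegral.integral_const_mul, intervalIntegral.integral_const_mul,
    intSinN m hm, swap_int ψ hψ β φ hφ S1 _ (by fun_prop) (fun t => abs_sin_le_one _)]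
  have hts : (∑' k, ∫ t in (0:ℝ)..(2*π), vterm ψ β φ k t * Real.sin ((m:ℝ)*t))
      = π * (ψ m * Qc β φ m) := by
    rw [tsum_congr (fun k => vterm_int_sin ψ β φ k m hm), tsum_eq_single (m-1)]
    · rw [if_pos (by omega)]
    · intro k hk; rw [if_neg (by omega)]
  rw [hts]
  have : π ≠ 0 := pi_ne_zero
  field_simp
  ring

lemma coeff_one : ∫ t in (0:ℝ)..(2*π), f t = π * a₀ := by
  have hgc := vsum_cont ψ β φ hψ hφ S1
  have key : ∀ t : ℝ, f t = (a₀/2) + (1/π) * ((∑' k, vterm ψ β φ k t) * 1) := by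
    intro t; rw [hrep2 t]; ring
  rw [intervalIntegral.integral_congr (fun t _ => key t),
    intervalIntegral.integral_add (intervalIntegrable_const)
      ((Continuous.intervalIntegrable (by exact ((hgc.mul continuous_const))) _ _).const_mul _),
    intervalIntegral.integral_const_mul,
    swap_int ψ hψ β φ hφ S1 _ (by fun_prop) (fun t => by norm_num)]
  rw [tsum_congr (fun k => vterm_int_one ψ β φ k), tsum_zero]
  simp
  ring_nf

lemma four_eq (n : ℕ) (hn : 1 ≤ n) (x : ℝ) :
    fourierSumR (n-1) f x = a₀/2 + (1/π) * ∑ i ∈ Finset.range (n-1), vterm ψ β φ i x := by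
  rw [fourierSumR, coeff_one ψ β φ f a₀ hψ hφ S1 hrep2]
  have hsum : ∀ k ∈ Finset.Icc 1 (n-1),
      (1 / π) * (∫ t in (0 : ℝ)..(2 * π), f t * Real.cos ((k:ℝ) * t)) * Real.cos ((k:ℝ) * x) +
        (1 / π) * (∫ t in (0 : ℝ)..(2 * π), f t * Real.sin ((k:ℝ) * t)) * Real.sin ((k:ℝ) * x)
      = (1/π) * (ψ k * (Real.cos ((k:ℝ)*x) * Pc β φ k + Real.sin ((k:ℝ)*x) * Qc β φ k)) := by
    intro k hk
    have hk1 : 1 ≤ k := (Finset.mem_Icc.1 hk).1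
    rw [coeff_cos ψ β φ f a₀ hψ hφ S1 hrep2 k hk1, coeff_sin ψ β φ f a₀ hψ hφ S1 hrep2 k hk1]
    ring
  rw [Finset.sum_congr rfl hsum]
  have hre : ∑ k ∈ Finset.Icc 1 (n-1),
      (1/π) * (ψ k * (Real.cos ((k:ℝ)*x) * Pc β φ k + Real.sin ((k:ℝ)*x) * Qc β φ k))
      = (1/π) * ∑ i ∈ Finset.range (n-1), vterm ψ β φ i x := by
    rw [← Finset.Ico_add_one_right_eq_Icc, Finset.sum_Ico_eq_sum_range, ← Finset.mul_sum]
    congr 1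
    have hrr : Finset.range (n - 1 + 1 - 1) = Finset.range (n-1) := by norm_num
    rw [hrr]
    apply Finset.sum_congr rfl
    intro i _
    rw [vterm]
    push_cast
    ring
  rw [hre]
  have hpi : (1:ℝ)/(2*π)*(π*a₀) = a₀/2 := by
    have : π ≠ 0 := pi_ne_zero
    field_simp
  rw [hpi]


end coeffs

-- from t9.lean

lemma trigPoly_continuous {m : ℕ} {T : ℝ → ℝ} (hT : IsTrigPoly m T) : Continuous T := by
  obtain ⟨a, b, hTf⟩ := hT
  have : T = fun t => a 0 + ∑ k ∈ Finset.Icc 1 m,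
      (a k * Real.cos (k * t) + b k * Real.sin (k * t)) := funext hTf
  rw [this]
  apply continuous_const.add
  apply continuous_finset_sum
  intro k _
  fun_prop

lemma trigPoly_orth (n N : ℕ) (hn : 1 ≤ n) (hN : n ≤ N) (θ : ℝ) (T : ℝ → ℝ)
    (hT : IsTrigPoly (n-1) T) :
    ∫ s in (0:ℝ)..(2*π), Real.cos ((N:ℝ)*s + θ) * T s = 0 := by
  obtain ⟨a, b, hTf⟩ := hT
  have key : ∀ s : ℝ, Real.cos ((N:ℝ)*s + θ) * T s
      = Real.cos ((N:ℝ)*s + θ) * a 0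
        + ∑ k ∈ Finset.Icc 1 (n-1),
          (a k * (Real.cos ((N:ℝ)*s + θ) * Real.cos ((k:ℝ)*s))
            + b k * (Real.cos ((N:ℝ)*s + θ) * Real.sin ((k:ℝ)*s))) := by
    intro s
    rw [hTf s, mul_add, Finset.mul_sum]
    congr 1
    apply Finset.sum_congr rfl
    intro k _
    ring
  rw [intervalIntegral.integral_congr (fun s _ => key s)]
  have hNk : ∀ k ∈ Finset.Icc 1 (n-1), N ≠ k := by
    intro k hk
    have := Finset.mem_Icc.1 hk
    omega
  rw [intervalIntegral.integral_add
      ((Continuous.intervalIntegrable (by fun_prop) _ _))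
      (Continuous.intervalIntegrable (continuous_finset_sum _ (fun k _ => by fun_prop)) _ _),
    intervalIntegral.integral_mul_const,
    ortho_c1 N (le_trans hn hN) θ,
    intervalIntegral.integral_finset_sum (fun k _ =>
        ((Continuous.intervalIntegrable (by fun_prop) _ _).const_mul _).add
          ((Continuous.intervalIntegrable (by fun_prop) _ _).const_mul _))]
  have hz : ∀ k ∈ Finset.Icc 1 (n-1),
      (∫ s in (0:ℝ)..(2*π),
        (a k * (Real.cos ((N:ℝ)*s + θ) * Real.cos ((k:ℝ)*s))
          + b k * (Real.cos ((N:ℝ)*s + θ) * Real.sin ((k:ℝ)*s)))) = 0 := by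
    intro k hk
    rw [intervalIntegral.integral_add
        ((Continuous.intervalIntegrable (by fun_prop) _ _).const_mul _)
        ((Continuous.intervalIntegrable (by fun_prop) _ _).const_mul _),
      intervalIntegral.integral_const_mul, intervalIntegral.integral_const_mul,
      ortho_cc N k (le_trans hn hN) θ, if_neg (hNk k hk),
      ortho_cs N k (le_trans hn hN) (hNk k hk) θ]
    ring
  rw [Finset.sum_congr rfl hz]
  simp

lemma R_bound (n N : ℕ) (hn : 1 ≤ n) (hN : n ≤ N) (θ : ℝ) (T φ : ℝ → ℝ)
    (hT : IsTrigPoly (n-1) T) (hper : ∀ x, φ (x + 2*π) = φ x)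
    (hφint : IntervalIntegrable φ volume (-π) π) :
    |∫ s in (-π)..π, Real.cos ((N:ℝ)*s + θ) * φ s|
      ≤ ∫ s in (0:ℝ)..(2*π), |φ s - T s| := by
  have hpi := pi_pos
  have hper2 : Function.Periodic (fun s => Real.cos ((N:ℝ)*s + θ) * φ s) (2*π) := by
    intro s
    have e1 : (N:ℝ)*(s + 2*π) + θ = ((N:ℝ)*s + θ) + (N:ℤ)*(2*π) := by push_cast; ring
    simp only [e1, Real.cos_add_int_mul_two_pi, hper s]
  rw [periodic_shift hper2]
  have hφ02 : IntervalIntegrable φ volume 0 (2*π) := periodic_integrable hper hφint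
  have hTc : Continuous T := trigPoly_continuous hT
  have hsub : IntervalIntegrable (fun s => φ s - T s) volume 0 (2*π) :=
    hφ02.sub (hTc.intervalIntegrable _ _)
  have hsplit : ∫ s in (0:ℝ)..(2*π), Real.cos ((N:ℝ)*s + θ) * φ s
      = (∫ s in (0:ℝ)..(2*π), Real.cos ((N:ℝ)*s + θ) * (φ s - T s))
        + ∫ s in (0:ℝ)..(2*π), Real.cos ((N:ℝ)*s + θ) * T s := by
    rw [← intervalIntegral.integral_add
      (hsub.continuousOn_mul (by fun_prop : Continuous fun s => Real.cos ((N:ℝ)*s + θ)).continuousOn)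
      ((hTc.intervalIntegrable _ _).continuousOn_mul
        (by fun_prop : Continuous fun s => Real.cos ((N:ℝ)*s + θ)).continuousOn)]
    apply intervalIntegral.integral_congr
    intro s _
    ring
  rw [hsplit, trigPoly_orth n N hn hN θ T hT, add_zero]
  exact abs_intervalIntegral_mul_le (by fun_prop) (fun s => abs_cos_le_one _)
    (by linarith) hsub




lemma combinePQ (β : ℝ) (φ : ℝ → ℝ) (hφint : IntervalIntegrable φ volume (-π) π)
    (N : ℕ) (x : ℝ) :
    Real.cos ((N:ℝ)*x) * Pc β φ N + Real.sin ((N:ℝ)*x) * Qc β φ N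
      = ∫ s in (-π)..π, Real.cos ((N:ℝ)*s + (β*π/2 - (N:ℝ)*x)) * φ s := by
  have key : ∀ s : ℝ, Real.cos ((N:ℝ)*s + (β*π/2 - (N:ℝ)*x)) * φ s
      = Real.cos ((N:ℝ)*x) * (Real.cos ((N:ℝ)*s + β*π/2) * φ s)
        + Real.sin ((N:ℝ)*x) * (Real.sin ((N:ℝ)*s + β*π/2) * φ s) := by
    intro s
    have e : (N:ℝ)*s + (β*π/2 - (N:ℝ)*x) = ((N:ℝ)*s + β*π/2) - (N:ℝ)*x := by ring
    rw [e, Real.cos_sub]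
    ring
  rw [intervalIntegral.integral_congr (fun s _ => key s),
    intervalIntegral.integral_add
      ((hφint.continuousOn_mul (by fun_prop : Continuous fun s =>
        Real.cos ((N:ℝ)*s + β*π/2)).continuousOn).const_mul _)
      ((hφint.continuousOn_mul (by fun_prop : Continuous fun s =>
        Real.sin ((N:ℝ)*s + β*π/2)).continuousOn).const_mul _),
    intervalIntegral.integral_const_mul, intervalIntegral.integral_const_mul, Pc, Qc]

set_option maxHeartbeats 2000000 in
/-- For a nonnegative `ψ` with `Σ k ψ(k) < ∞`, `β ∈ ℝ`, `n ≥ 1`, and any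
`f ∈ C^ψ_β L₁` with `(ψ,β)`-derivative `φ`:
`‖f - S_{n-1}(f;·)‖_C ≤ (1/π) (Σ_{k=n}^∞ ψ(k)) E_n(f^ψ_β)_{L₁}`. -/
theorem lebesgue_type_upper_bound (ψ : ℕ → ℝ) (hψ : ∀ k, 0 ≤ ψ k)
    (hsum : Summable (fun k : ℕ => (k : ℝ) * ψ k)) (β : ℝ) (n : ℕ) (hn : 1 ≤ n)
    (f φ : ℝ → ℝ) (hf : InClassL1 ψ β f φ) :
    dev n f ≤ (1 / π) * (∑' k : ℕ, ψ (k + n)) * bestL1 n φ := by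
  have hpi := pi_pos
  obtain ⟨hfc, hfper, hφper, hφint, hφzero, a₀, hrep⟩ := hf
  have h1 : Summable (fun k : ℕ => ((k+1 : ℕ) : ℝ) * ψ (k+1)) :=
    (summable_nat_add_iff (f := fun k : ℕ => (k:ℝ) * ψ k) 1).2 hsum
  have S1 : Summable (fun k => ψ (k+1)) := by
    apply Summable.of_nonneg_of_le (fun k => hψ _) (fun k => ?_) h1
    exact le_mul_of_one_le_left (hψ _) (by exact_mod_cast Nat.succ_le_succ (Nat.zero_le k))
  have Sψ : Summable ψ := (summable_nat_add_iff 1).1 S1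
  have SN : Summable (fun k => ψ (k+n)) := (summable_nat_add_iff n).2 Sψ
  have hrep2 : ∀ t, f t = a₀/2 + (1/π) * ∑' k, vterm ψ β φ k t := by
    intro t
    rw [hrep t, rep_lemma ψ hψ β φ hφint S1 t]
  have hsummv : ∀ x : ℝ, Summable (fun k => vterm ψ β φ k x) := by
    intro x
    apply Summable.of_abs
    exact Summable.of_nonneg_of_le (fun k => abs_nonneg _)
      (fun k => vterm_bound ψ hψ β φ hφint k x) (S1.mul_right _)
  have hdiff : ∀ x, f x - fourierSumR (n-1) f x = (1/π) * ∑' k, vterm ψ β φ (k+(n-1)) x := by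
    intro x
    rw [hrep2 x, four_eq ψ β φ f a₀ hψ hφint S1 hrep2 n hn x]
    have hs := Summable.sum_add_tsum_nat_add (f := fun k => vterm ψ β φ k x) (n-1) (hsummv x)
    rw [← hs]
    ring
  set c : ℝ := (1/π) * ∑' k, ψ (k+n) with hc
  have htsumnn : (0:ℝ) ≤ ∑' k, ψ (k+n) := tsum_nonneg (fun k => hψ _)
  have hcnn : 0 ≤ c := mul_nonneg (by positivity) htsumnn
  have hkey : ∀ T : ℝ → ℝ, IsTrigPoly (n-1) T →
      dev n f ≤ c * ∫ s in (0:ℝ)..(2*π), |φ s - T s| := by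
    intro T hT
    set I := ∫ s in (0:ℝ)..(2*π), |φ s - T s| with hI
    have hInn : 0 ≤ I :=
      intervalIntegral.integral_nonneg (by linarith) (fun s _ => abs_nonneg _)
    apply Real.iSup_le _ (mul_nonneg hcnn hInn)
    intro x
    have hterm : ∀ k : ℕ, |vterm ψ β φ (k+(n-1)) x| ≤ ψ (k+n) * I := by
      intro k
      have hidx : (k+(n-1))+1 = k+n := by omega
      have hcast : ((k+(n-1) : ℕ) : ℝ) + 1 = ((k+n : ℕ) : ℝ) := by
        push_cast [Nat.cast_sub hn]
        ring
      have hv : vterm ψ β φ (k+(n-1)) x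
          = ψ (k+n) * (Real.cos (((k+n:ℕ):ℝ)*x) * Pc β φ (k+n)
            + Real.sin (((k+n:ℕ):ℝ)*x) * Qc β φ (k+n)) := by
        rw [vterm, hidx, hcast]
      rw [hv, combinePQ β φ hφint (k+n) x, abs_mul, abs_of_nonneg (hψ _)]
      apply mul_le_mul_of_nonneg_left _ (hψ _)
      exact R_bound n (k+n) hn (by omega) _ T φ hT hφper hφint
    have hs1 : Summable (fun k => |vterm ψ β φ (k+(n-1)) x|) :=
      Summable.of_nonneg_of_le (fun k => abs_nonneg _) hterm (SN.mul_right I)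
    have habs : |∑' k, vterm ψ β φ (k+(n-1)) x| ≤ ∑' k, ψ (k+n) * I := by
      have hs1' : Summable (fun k => ‖vterm ψ β φ (k+(n-1)) x‖) := by
        simpa only [Real.norm_eq_abs] using hs1
      have h4 := norm_tsum_le_tsum_norm hs1'
      simp only [Real.norm_eq_abs] at h4
      calc |∑' k, vterm ψ β φ (k+(n-1)) x| ≤ ∑' k, |vterm ψ β φ (k+(n-1)) x| := h4
        _ ≤ ∑' k, ψ (k+n) * I := Summable.tsum_le_tsum hterm hs1 (SN.mul_right I)
    calc |f x - fourierSumR (n - 1) f x|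
        = (1/π) * |∑' k, vterm ψ β φ (k+(n-1)) x| := by
          rw [hdiff x, abs_mul, abs_of_nonneg (by positivity : (0:ℝ) ≤ 1/π)]
      _ ≤ (1/π) * ∑' k, ψ (k+n) * I := by
          exact mul_le_mul_of_nonneg_left habs (by positivity)
      _ = c * I := by rw [tsum_mul_right, hc]; ring
  have hb : bestL1 n φ = sInf {I : ℝ | ∃ T : ℝ → ℝ, IsTrigPoly (n - 1) T ∧
      I = ∫ t in (0 : ℝ)..(2 * π), |φ t - T t|} := rfl
  have hgoal : (1 / π) * (∑' k : ℕ, ψ (k + n)) * bestL1 n φ = c * bestL1 n φ := by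
    rw [hc]
  rw [hgoal]
  set Sset := {I : ℝ | ∃ T : ℝ → ℝ, IsTrigPoly (n - 1) T ∧
      I = ∫ t in (0 : ℝ)..(2 * π), |φ t - T t|} with hSset
  have hzero : IsTrigPoly (n-1) (fun _ => (0:ℝ)) := ⟨fun _ => 0, fun _ => 0, by simp⟩
  have hne : Sset.Nonempty :=
    ⟨∫ t in (0:ℝ)..(2*π), |φ t - (fun _ => (0:ℝ)) t|, ⟨fun _ => (0:ℝ), hzero, rfl⟩⟩
  have hle : ∀ I ∈ Sset, dev n f ≤ c * I := by
    rintro I ⟨T, hT, rfl⟩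
    exact hkey T hT
  rcases hcnn.eq_or_lt with h0 | hpos
  · obtain ⟨I0, hI0⟩ := hne
    have h2 := hle I0 hI0
    rw [← h0] at h2 ⊢
    simpa using h2
  · have hinf : dev n f / c ≤ sInf Sset :=
      le_csInf hne (fun I hI => (div_le_iff₀ hpos).2 (by rw [mul_comm]; exact hle I hI))
    have h3 := (div_le_iff₀ hpos).1 hinf
    have hb2 : bestL1 n φ = sInf Sset := hb
    rw [hb2]
    linarith [h3]
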